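/- Let n ≥ 2 and let M be a Coxeter matrix on Fin n (so M i i = 1 and M i j = M j i) such that the simple graph Υ on Fin n with adjacency i ~ j iff i ≠ j and M i j ≠ 0 is a tree (connected with exactly n−1 edges), and such that M i j is odd for every edge {i,j} of Υ. Then there exist, for each k ∈ Fin (n−1), distinct vertices i_k, j_k ∈ Fin n and a word w_k in the free group on Fin n, such that the n−1 unordered pairs {i_k, j_k} are exactly the edges of Υ, and the group presented by generators Fin n and the n−1 relators x_{i_k} · w_k · x_{j_k}⁻¹ · w_k⁻¹ admits a surjective group homomorphism onto the Coxeter group of M sending each generator to the corresponding Coxeter generator. -/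

import Mathlib

/-- If `M` is a Coxeter matrix on `Fin n` (`n ≥ 2`) whose Coxeter graph `Υ`
(adjacency: `i ≠ j` and `M i j ≠ 0`) is a tree (connected with exactly `n - 1` edges) with all
edge labels `M i j` odd, then there is a labeled oriented tree presentation on `Fin n`
(relators `x_{i_k} · w_k · x_{j_k}⁻¹ · w_k⁻¹`, with the pairs `{i_k, j_k}` exactly the edges
of `Υ`) whose group surjects onto the Coxeter group of `M`, sending generators to the
corresponding Coxeter generators. -/
theorem stmt_1 (n : ℕ) (hn : 2 ≤ n) (M : CoxeterMatrix (Fin n))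
    (Υ : SimpleGraph (Fin n))
    (hΥ : ∀ i j, Υ.Adj i j ↔ i ≠ j ∧ M i j ≠ 0)
    (hconn : Υ.Connected)
    (hcard : Υ.edgeSet.ncard = n - 1)
    (hodd : ∀ i j, Υ.Adj i j → Odd (M i j)) :
    ∃ (i j : Fin (n - 1) → Fin n) (w : Fin (n - 1) → FreeGroup (Fin n)),
      (∀ k, i k ≠ j k) ∧
      (Set.range fun k => s(i k, j k)) = Υ.edgeSet ∧
      ∃ φ : PresentedGroup
          (Set.range fun k => FreeGroup.of (i k) * w k * (FreeGroup.of (j k))⁻¹ * (w k)⁻¹)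
          →* M.Group,
        Function.Surjective φ ∧ ∀ v : Fin n, φ (PresentedGroup.of v) = M.simple v := by
  classical
  have hfin : Υ.edgeSet.Finite := Set.toFinite _
  have hcardE : hfin.toFinset.card = n - 1 := by
    rw [Set.ncard_eq_toFinset_card _ hfin] at hcard
    exact hcard
  let e : Fin (n - 1) ≃ hfin.toFinset := (Finset.equivFinOfCardEq hcardE).symm
  let i : Fin (n - 1) → Fin n := fun k => ((e k : Sym2 (Fin n)).out).1
  let j : Fin (n - 1) → Fin n := fun k => ((e k : Sym2 (Fin n)).out).2
  have hmk : ∀ k, s(i k, j k) = (e k : Sym2 (Fin n)) := fun k => by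
    show Sym2.mk _ _ = _
    exact Quot.out_eq _
  have hadj : ∀ k, Υ.Adj (i k) (j k) := fun k => by
    rw [← SimpleGraph.mem_edgeSet, hmk k, ← Set.Finite.mem_toFinset hfin]
    exact (e k).2
  have hne : ∀ k, i k ≠ j k := fun k => (hadj k).ne
  -- the exponent m with M i j = 2 m + 1
  have hm : ∀ k, ∃ m : ℕ, M (i k) (j k) = 2 * m + 1 := fun k => by
    obtain ⟨m, hm⟩ := hodd _ _ (hadj k)
    exact ⟨m, hm⟩
  choose m hm using hm
  let w : Fin (n - 1) → FreeGroup (Fin n) :=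
    fun k => (FreeGroup.of (j k) * FreeGroup.of (i k)) ^ m k
  refine ⟨i, j, w, hne, ?_, ?_⟩
  · ext s
    constructor
    · rintro ⟨k, rfl⟩
      show s(i k, j k) ∈ Υ.edgeSet
      rw [hmk k, ← Set.Finite.mem_toFinset hfin]
      exact (e k).2
    · intro hs
      refine ⟨e.symm ⟨s, (Set.Finite.mem_toFinset hfin).2 hs⟩, ?_⟩
      show s(i _, j _) = s
      rw [hmk, e.apply_symm_apply]
  · -- build the homomorphism
    have hrel : ∀ r ∈ (Set.range fun k =>
        FreeGroup.of (i k) * w k * (FreeGroup.of (j k))⁻¹ * (w k)⁻¹),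
        FreeGroup.lift M.simple r = 1 := by
      rintro r ⟨k, rfl⟩
      have ha : (M.simple (i k))⁻¹ = M.simple (i k) :=
        M.toCoxeterSystem.inv_simple (i k)
      have hb : (M.simple (j k))⁻¹ = M.simple (j k) :=
        M.toCoxeterSystem.inv_simple (j k)
      have hab : (M.simple (i k) * M.simple (j k)) ^ (2 * m k + 1) = 1 := by
        rw [← hm k]
        exact M.toCoxeterSystem.simple_mul_simple_pow (i k) (j k)
      simp only [map_mul, map_inv, map_pow, FreeGroup.lift_apply_of, w]
      set a := M.simple (i k)
      set b := M.simple (j k)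
      have h1 : ((b * a) ^ m k)⁻¹ = (a * b) ^ m k := by
        rw [← inv_pow, mul_inv_rev, ha, hb]
      have h2 : ∀ p : ℕ, a * (b * a) ^ p = (a * b) ^ p * a := by
        intro p
        induction p with
        | zero => simp
        | succ q ih => rw [pow_succ, ← mul_assoc, ih, pow_succ]; group
      calc a * (b * a) ^ m k * b⁻¹ * ((b * a) ^ m k)⁻¹
          = (a * b) ^ m k * a * b * (a * b) ^ m k := by rw [h1, h2, hb]
        _ = (a * b) ^ m k * (a * b) * (a * b) ^ m k := by
            rw [mul_assoc ((a * b) ^ m k) a b]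
        _ = (a * b) ^ (m k + 1) * (a * b) ^ m k := by rw [pow_succ]
        _ = (a * b) ^ (2 * m k + 1) := by rw [← pow_add]; congr 1; omega
        _ = 1 := hab
    refine ⟨PresentedGroup.toGroup hrel, ?_, fun v => PresentedGroup.toGroup.of hrel⟩
    -- surjectivity
    rw [← MonoidHom.range_eq_top, ← top_le_iff,
      ← M.toCoxeterSystem.subgroup_closure_range_simple, Subgroup.closure_le]
    rintro x ⟨v, rfl⟩
    exact ⟨PresentedGroup.of v, PresentedGroup.toGroup.of hrel⟩
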